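/- Let p = t - r with r ∈ ℝ, r ≠ 0, r ≠ ±1, and n ∈ ℕ. Define V = ℝ[t]/(pⁿ) ⊕ ℝ[t]/(p̃ⁿ) where p̃ = t - r⁻¹, with a acting as multiplication by t on each summand and b(u(t), v(t)) = (-v(t), u(t)) suitably interpreted so that ba = a⁻¹b and b² = -1. Then V is an indecomposable module over the algebra generated by a, b: V is not a direct sum of two nonzero invariant subspaces. -/

import Mathlib

open Polynomial

/-- `ℝ[t]/((t-r)ⁿ)`. -/
noncomputable abbrev JQuot (r : ℝ) (n : ℕ) :=
  ℝ[X] ⧸ Ideal.span ({((X - C r) ^ n : ℝ[X])} : Set ℝ[X])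

/-- `a` acts by multiplication by `t` on each summand of
`V = ℝ[t]/((t-r)ⁿ) ⊕ ℝ[t]/((t-r⁻¹)ⁿ)`. -/
noncomputable def aDiag (r : ℝ) (n : ℕ) : Module.End ℝ (JQuot r n × JQuot r⁻¹ n) :=
  (LinearMap.mulLeft ℝ (Ideal.Quotient.mk _ (X : ℝ[X]))).prodMap
    (LinearMap.mulLeft ℝ (Ideal.Quotient.mk _ (X : ℝ[X])))

set_option maxHeartbeats 1000000
set_option synthInstance.maxHeartbeats 400000

namespace Stmt11Aux

/-- scalar action on a polynomial quotient is multiplication by `mk (C t)`. -/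
lemma smul_eq_mk_C_mul (I : Ideal ℝ[X]) (t : ℝ) (y : ℝ[X] ⧸ I) :
    t • y = Ideal.Quotient.mk I (C t) * y := by
  obtain ⟨p, rfl⟩ := Ideal.Quotient.mk_surjective y
  rw [← map_mul, ← smul_eq_C_mul, ← Ideal.Quotient.mkₐ_eq_mk ℝ I]
  exact (map_smul (Ideal.Quotient.mkₐ ℝ I) t p).symm

lemma aDiag_apply (r : ℝ) (n : ℕ) (x : JQuot r n × JQuot r⁻¹ n) :
    aDiag r n x = (Ideal.Quotient.mk _ (X : ℝ[X]) * x.1,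
      Ideal.Quotient.mk _ (X : ℝ[X]) * x.2) := rfl

/-- if `f` is coprime to `g` then `mk f` is a unit in `ℝ[X]⧸(g)`. -/
lemma isUnit_mk {f g : ℝ[X]} (h : IsCoprime f g) :
    IsUnit (Ideal.Quotient.mk (Ideal.span {g}) f) := by
  obtain ⟨u, v, huv⟩ := h
  have hg : Ideal.Quotient.mk (Ideal.span {g}) g = 0 :=
    Ideal.Quotient.eq_zero_iff_mem.mpr (Ideal.mem_span_singleton_self g)
  have h1 := congrArg (Ideal.Quotient.mk (Ideal.span {g})) huv
  rw [map_add, map_mul, map_mul, hg, mul_zero, add_zero, map_one] at h1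
  exact IsUnit.of_mul_eq_one _ (by rw [mul_comm]; exact h1)

lemma coprime_X_sub_C_sub (c d : ℝ) (h : c ≠ d) :
    IsCoprime (X - C c) ((X - C d : ℝ[X])) := by
  refine ⟨C (d - c)⁻¹, -C (d - c)⁻¹, ?_⟩
  have hdc : (d : ℝ) - c ≠ 0 := sub_ne_zero.mpr (Ne.symm h)
  have e : C (d - c)⁻¹ * (X - C c) + -C (d - c)⁻¹ * (X - C d)
      = C (d - c)⁻¹ * (C d - C c) := by ring
  rw [e, ← C_sub, ← C_mul, inv_mul_cancel₀ hdc, C_1]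

lemma coprime_X (s : ℝ) (h : s ≠ 0) : IsCoprime (X : ℝ[X]) (X - C s) := by
  refine ⟨C s⁻¹, -C s⁻¹, ?_⟩
  have e : C s⁻¹ * X + -C s⁻¹ * (X - C s) = C s⁻¹ * C s := by ring
  rw [e, ← C_mul, inv_mul_cancel₀ h, C_1]

lemma pow_apply (r : ℝ) (n k : ℕ) (x : JQuot r n × JQuot r⁻¹ n) :
    ((aDiag r n) ^ k) x
      = ((Ideal.Quotient.mk _ (X : ℝ[X])) ^ k * x.1,
         (Ideal.Quotient.mk _ (X : ℝ[X])) ^ k * x.2) := by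
  induction k with
  | zero => simp
  | succ k ih =>
      rw [pow_succ', Module.End.mul_apply, ih, aDiag_apply]
      simp only [← mul_assoc, ← pow_succ']

lemma aeval_apply (r : ℝ) (n : ℕ) (f : ℝ[X]) (x : JQuot r n × JQuot r⁻¹ n) :
    (aeval (aDiag r n) f) x
      = (Ideal.Quotient.mk _ f * x.1, Ideal.Quotient.mk _ f * x.2) := by
  induction f using Polynomial.induction_on' with
  | add p q hp hq =>
      rw [map_add, LinearMap.add_apply, hp, hq, map_add, map_add]
      simp [add_mul, Prod.ext_iff]
  | monomial k c =>
      rw [← C_mul_X_pow_eq_monomial, map_mul, aeval_C, map_pow, aeval_X,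
        Module.End.mul_apply, Module.algebraMap_end_apply, pow_apply]
      rw [Prod.smul_mk, smul_eq_mk_C_mul, smul_eq_mk_C_mul, map_mul, map_mul,
        map_pow, map_pow]
      simp [mul_assoc]

lemma pow_mem (r : ℝ) (n : ℕ) (W : Submodule ℝ (JQuot r n × JQuot r⁻¹ n))
    (hW : Submodule.map (aDiag r n) W ≤ W) (k : ℕ)
    {x : JQuot r n × JQuot r⁻¹ n} (hx : x ∈ W) : ((aDiag r n) ^ k) x ∈ W := by
  induction k with
  | zero => simpa using hx
  | succ k ih =>
      rw [pow_succ', Module.End.mul_apply]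
      exact hW ⟨_, ih, rfl⟩

lemma aeval_mem (r : ℝ) (n : ℕ) (W : Submodule ℝ (JQuot r n × JQuot r⁻¹ n))
    (hW : Submodule.map (aDiag r n) W ≤ W) (f : ℝ[X])
    {x : JQuot r n × JQuot r⁻¹ n} (hx : x ∈ W) :
    (aeval (aDiag r n) f) x ∈ W := by
  induction f using Polynomial.induction_on' with
  | add p q hp hq => rw [map_add, LinearMap.add_apply]; exact W.add_mem hp hq
  | monomial k c =>
      rw [← C_mul_X_pow_eq_monomial, map_mul, aeval_C, map_pow, aeval_X,
        Module.End.mul_apply, Module.algebraMap_end_apply]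
      exact W.smul_mem _ (pow_mem r n W hW k hx)

lemma socle (s : ℝ) (n : ℕ) (hn : 0 < n) (z : JQuot s n) (hz : z ≠ 0) :
    ∃ f : ℝ[X], Ideal.Quotient.mk _ f * z
      = Ideal.Quotient.mk _ ((X - C s) ^ (n - 1)) := by
  obtain ⟨g, rfl⟩ := Ideal.Quotient.mk_surjective z
  have hg0 : g ≠ 0 := by rintro rfl; simp at hz
  have hnd : ¬ (X - C s) ^ n ∣ g := fun h =>
    hz (Ideal.Quotient.eq_zero_iff_mem.mpr (Ideal.mem_span_singleton.mpr h))
  obtain ⟨h, hgh, hhd⟩ := g.exists_eq_pow_rootMultiplicity_mul_and_not_dvd hg0 s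
  set k := g.rootMultiplicity s with hk
  have hkn : k < n := by
    by_contra hc
    exact hnd (dvd_trans (pow_dvd_pow _ (not_lt.mp hc)) ⟨h, hgh⟩)
  have hcop : IsCoprime h ((X - C s) ^ n) :=
    (((irreducible_X_sub_C s).coprime_iff_not_dvd.mpr hhd).symm).pow_right
  obtain ⟨c, hc⟩ := (isUnit_mk hcop).exists_left_inv
  obtain ⟨c', rfl⟩ := Ideal.Quotient.mk_surjective c
  refine ⟨c' * (X - C s) ^ (n - 1 - k), ?_⟩
  have hpk : ((X - C s) : ℝ[X]) ^ (n - 1 - k) * (X - C s) ^ k = (X - C s) ^ (n - 1) := by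
    rw [← pow_add]; congr 1; omega
  have key : (c' * (X - C s) ^ (n - 1 - k)) * g
      = ((X - C s) ^ (n - 1)) * (c' * h) := by
    rw [hgh, ← hpk]; ring
  rw [← map_mul, key, map_mul, map_mul, hc, mul_one]

lemma mk_pow_ne_zero (s : ℝ) (n : ℕ) (hn : 0 < n) :
    (Ideal.Quotient.mk (Ideal.span {((X - C s) ^ n : ℝ[X])})
      ((X - C s) ^ (n - 1))) ≠ 0 := by
  intro h
  have h2 := Ideal.mem_span_singleton.mp (Ideal.Quotient.eq_zero_iff_mem.mp h)
  rw [pow_dvd_pow_iff (X_sub_C_ne_zero s) (not_isUnit_X_sub_C s)] at h2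
  omega

end Stmt11Aux

open Stmt11Aux in
/-- Let `p = t - r` with `r ∉ {0, 1, -1}` and `p̃ = t - r⁻¹`, and let
`V = ℝ[t]/(pⁿ) ⊕ ℝ[t]/(p̃ⁿ)` with `a` acting by multiplication by `t` on each
summand. For any `b` interpreted so that `ba = a⁻¹b` and `b² = -1`, the
resulting module is indecomposable: `V` is not the direct sum of two nonzero
subspaces invariant under both `a` and `b`. -/
theorem stmt11 (r : ℝ) (hr0 : r ≠ 0) (hr1 : r ≠ 1) (hrm1 : r ≠ -1)
    (n : ℕ) (hn : 0 < n)
    (b : Module.End ℝ (JQuot r n × JQuot r⁻¹ n))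
    (hb2 : b * b = -1)
    (hrel : b * aDiag r n = Ring.inverse (aDiag r n) * b) :
    ¬ ∃ W₁ W₂ : Submodule ℝ (JQuot r n × JQuot r⁻¹ n),
      W₁ ≠ ⊥ ∧ W₂ ≠ ⊥ ∧
      Submodule.map (aDiag r n) W₁ ≤ W₁ ∧ Submodule.map b W₁ ≤ W₁ ∧
      Submodule.map (aDiag r n) W₂ ≤ W₂ ∧ Submodule.map b W₂ ≤ W₂ ∧
      W₁ ⊓ W₂ = ⊥ ∧ W₁ ⊔ W₂ = ⊤ := by
  rintro ⟨W₁, W₂, hW₁, hW₂, ha₁, hbW₁, ha₂, hbW₂, hinf, -⟩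
  set a := aDiag r n with ha_def
  set ρ := algebraMap ℝ (Module.End ℝ (JQuot r n × JQuot r⁻¹ n)) with hρ_def
  -- basic real-number facts
  have hrinv0 : r⁻¹ ≠ 0 := inv_ne_zero hr0
  have hrr : r⁻¹ ≠ r := by
    intro h
    have h2 : r * r = 1 := by rw [← mul_inv_cancel₀ hr0, h]
    rcases mul_self_eq_one_iff.mp h2 with h3 | h3
    · exact hr1 h3
    · exact hrm1 h3
  -- injectivity of b
  have hbinj : ∀ x, b x = 0 → x = 0 := by
    intro x hx
    have h1 : b (b x) = -x := by
      rw [← Module.End.mul_apply, hb2]; simp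
    rw [hx, map_zero] at h1
    exact neg_eq_zero.mp h1.symm
  -- an explicit inverse e for a
  obtain ⟨c₁, hc₁⟩ := (isUnit_mk ((coprime_X r hr0).pow_right (n := n))).exists_left_inv
  obtain ⟨c₂, hc₂⟩ :=
    (isUnit_mk ((coprime_X r⁻¹ hrinv0).pow_right (n := n))).exists_left_inv
  set e : Module.End ℝ (JQuot r n × JQuot r⁻¹ n) :=
    (LinearMap.mulLeft ℝ c₁).prodMap (LinearMap.mulLeft ℝ c₂) with he_def
  have hc₁' : Ideal.Quotient.mk _ (X : ℝ[X]) * c₁ = 1 := by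
    rw [mul_comm]; exact hc₁
  have hc₂' : Ideal.Quotient.mk _ (X : ℝ[X]) * c₂ = 1 := by
    rw [mul_comm]; exact hc₂
  have hea : e * a = 1 := by
    apply LinearMap.ext; intro x
    simp only [Module.End.mul_apply, Module.End.one_apply,
      he_def, ha_def, aDiag, LinearMap.prodMap_apply, LinearMap.mulLeft_apply,
      LinearMap.coe_prodMap, LinearMap.fst_apply, LinearMap.snd_apply,
      Prod.map_apply, ← mul_assoc, hc₁, hc₂, one_mul]
  have hae : a * e = 1 := by
    apply LinearMap.ext; intro x
    simp only [Module.End.mul_apply, Module.End.one_apply,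
      he_def, ha_def, aDiag, LinearMap.prodMap_apply, LinearMap.mulLeft_apply,
      LinearMap.coe_prodMap, LinearMap.fst_apply, LinearMap.snd_apply,
      Prod.map_apply, ← mul_assoc, hc₁', hc₂', one_mul]
  -- identify Ring.inverse a with e
  have hinv : Ring.inverse a = e := by
    have h1 : a = ((⟨a, e, hae, hea⟩ : (Module.End ℝ (JQuot r n × JQuot r⁻¹ n))ˣ) :
        Module.End ℝ (JQuot r n × JQuot r⁻¹ n)) := rfl
    rw [h1, Ring.inverse_unit]
    rfl
  rw [hinv] at hrel
  -- a * b = b * e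
  have hab : a * b = b * e := by
    have h3 : a * (b * a) * e = a * b := by
      rw [← mul_assoc a b a, mul_assoc (a * b) a e, hae, mul_one]
    have h4 : a * (e * b) * e = b * e := by
      rw [← mul_assoc a e b, hae, one_mul]
    calc a * b = a * (b * a) * e := h3.symm
      _ = a * (e * b) * e := by rw [hrel]
      _ = b * e := h4
  -- the twisted element s
  set s : Module.End ℝ (JQuot r n × JQuot r⁻¹ n) := ρ (-r⁻¹) * (e * (a - ρ r))
    with hs_def
  have he1 : e * (a - ρ r) = 1 - ρ r * e := by
    rw [mul_sub, hea, ← Algebra.commutes r e]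
  have he2 : (a - ρ r) * e = 1 - ρ r * e := by
    rw [sub_mul, hae]
  have hcomm : Commute e (a - ρ r) := by
    show e * (a - ρ r) = (a - ρ r) * e
    rw [he1, he2]
  have hkey : e - ρ r⁻¹ = s := by
    rw [hs_def, he1, mul_sub, mul_one, ← mul_assoc, ← map_mul]
    have h5 : (-r⁻¹) * r = -1 := by field_simp
    rw [h5]
    rw [map_neg, map_neg, map_one,
      show (-1 : Module.End ℝ (JQuot r n × JQuot r⁻¹ n)) * e = -e from
        neg_one_mul e,
      sub_neg_eq_add]
    exact sub_eq_neg_add e (ρ r⁻¹)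
  have hstep : (a - ρ r⁻¹) * b = b * s := by
    calc (a - ρ r⁻¹) * b = a * b - ρ r⁻¹ * b := sub_mul _ _ _
      _ = b * e - b * ρ r⁻¹ := by rw [hab, Algebra.commutes r⁻¹ b]
      _ = b * (e - ρ r⁻¹) := (mul_sub _ _ _).symm
      _ = b * s := by rw [hkey]
  have hpow : ∀ k, (a - ρ r⁻¹) ^ k * b = b * s ^ k := by
    intro k
    induction k with
    | zero => simp
    | succ k ih =>
        calc (a - ρ r⁻¹) ^ (k + 1) * b
            = (a - ρ r⁻¹) ^ k * ((a - ρ r⁻¹) * b) := by rw [pow_succ, mul_assoc]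
          _ = (a - ρ r⁻¹) ^ k * (b * s) := by rw [hstep]
          _ = ((a - ρ r⁻¹) ^ k * b) * s := by rw [mul_assoc]
          _ = b * s ^ k * s := by rw [ih]
          _ = b * s ^ (k + 1) := by rw [mul_assoc, ← pow_succ]
  have hsn : s ^ n = ρ ((-r⁻¹) ^ n) * (e ^ n * (a - ρ r) ^ n) := by
    have hc1 : Commute (ρ (-r⁻¹)) (e * (a - ρ r)) := Algebra.commutes _ _
    rw [hs_def, hc1.mul_pow, hcomm.mul_pow, map_pow]
  -- powers of (a - ρ t) via aeval
  have haeval_pow : ∀ (t : ℝ) (k : ℕ),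
      (a - ρ t) ^ k = aeval a ((X - C t) ^ k) := by
    intro t k
    rw [map_pow, map_sub, aeval_X, aeval_C]
  -- b maps the first summand into the second
  have hbV : ∀ x : JQuot r n × JQuot r⁻¹ n, x.2 = 0 → (b x).1 = 0 := by
    intro x hx2
    have hP : ((a - ρ r) ^ n) x = 0 := by
      rw [haeval_pow, ha_def, aeval_apply]
      have h1 : (Ideal.Quotient.mk (Ideal.span {((X - C r) ^ n : ℝ[X])}))
          ((X - C r) ^ n) = 0 :=
        Ideal.Quotient.eq_zero_iff_mem.mpr (Ideal.mem_span_singleton_self _)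
      rw [h1, zero_mul, hx2, mul_zero]
      rfl
    have h2 : ((a - ρ r⁻¹) ^ n) (b x) = 0 := by
      have h3 : ((a - ρ r⁻¹) ^ n * b) x = (b * s ^ n) x := by rw [hpow n]
      rw [Module.End.mul_apply, Module.End.mul_apply] at h3
      rw [h3, hsn, Module.End.mul_apply, Module.End.mul_apply, hP, map_zero,
        map_zero, map_zero]
    rw [haeval_pow, ha_def, aeval_apply] at h2
    have h4 := congrArg Prod.fst h2
    simp only at h4
    have hu : IsUnit ((Ideal.Quotient.mk (Ideal.span {((X - C r) ^ n : ℝ[X])}))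
        ((X - C r⁻¹) ^ n)) :=
      isUnit_mk ((coprime_X_sub_C_sub r⁻¹ r hrr).pow)
    exact (IsUnit.mul_right_eq_zero hu).mp h4
  -- splitting: the second-component projection of any element of an
  -- a-invariant subspace stays in the subspace
  have hsplit : ∀ W : Submodule ℝ (JQuot r n × JQuot r⁻¹ n),
      Submodule.map a W ≤ W → ∀ x ∈ W, ((0 : JQuot r n), x.2) ∈ W := by
    intro W hWa x hx
    obtain ⟨u, v, huv⟩ := ((coprime_X_sub_C_sub r r⁻¹ (Ne.symm hrr)).pow
      (m := n) (n := n))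
    have hmem := aeval_mem r n W hWa (u * (X - C r) ^ n) hx
    have hval : aeval (aDiag r n) (u * (X - C r) ^ n) x = (0, x.2) := by
      rw [aeval_apply]
      have h1 : (Ideal.Quotient.mk (Ideal.span {((X - C r) ^ n : ℝ[X])}))
          (u * (X - C r) ^ n) = 0 := by
        rw [map_mul, Ideal.Quotient.eq_zero_iff_mem.mpr
          (Ideal.mem_span_singleton_self _), mul_zero]
      have h2 : (Ideal.Quotient.mk (Ideal.span {((X - C r⁻¹) ^ n : ℝ[X])}))
          (u * (X - C r) ^ n) = 1 := by
        have h3 := congrArg (Ideal.Quotient.mk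
          (Ideal.span {((X - C r⁻¹) ^ n : ℝ[X])})) huv
        rw [map_add, map_mul, map_mul, Ideal.Quotient.eq_zero_iff_mem.mpr
          (Ideal.mem_span_singleton_self _), mul_zero, add_zero, map_one] at h3
        rw [map_mul]
        exact h3
      rw [h1, h2, zero_mul, one_mul]
    rw [hval] at hmem
    exact hmem
  -- a subspace invariant under a and b, meeting the second summand trivially,
  -- must be zero
  have hWcase : ∀ W : Submodule ℝ (JQuot r n × JQuot r⁻¹ n), W ≠ ⊥ →
      Submodule.map a W ≤ W → Submodule.map b W ≤ W →
      (¬ ∃ z : JQuot r⁻¹ n, z ≠ 0 ∧ ((0 : JQuot r n), z) ∈ W) → False := by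
    intro W hWne hWa hWb hN
    obtain ⟨x, hxW, hx0⟩ := (Submodule.ne_bot_iff W).mp hWne
    have hx2 : x.2 = 0 := by
      by_contra h
      exact hN ⟨x.2, h, hsplit W hWa x hxW⟩
    have hbxW : b x ∈ W := hWb ⟨x, hxW, rfl⟩
    have hbx2 : (b x).2 = 0 := by
      by_contra h
      exact hN ⟨(b x).2, h, hsplit W hWa _ hbxW⟩
    have hbx1 : (b x).1 = 0 := hbV x hx2
    have hbx : b x = 0 := Prod.ext_iff.mpr ⟨hbx1, hbx2⟩
    exact hx0 (hbinj x hbx)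
  -- final case analysis
  by_cases h₁ : ∃ z : JQuot r⁻¹ n, z ≠ 0 ∧ ((0 : JQuot r n), z) ∈ W₁
  · by_cases h₂ : ∃ z : JQuot r⁻¹ n, z ≠ 0 ∧ ((0 : JQuot r n), z) ∈ W₂
    · obtain ⟨z₁, hz₁, hm₁⟩ := h₁
      obtain ⟨z₂, hz₂, hm₂⟩ := h₂
      obtain ⟨f₁, hf₁⟩ := socle r⁻¹ n hn z₁ hz₁
      obtain ⟨f₂, hf₂⟩ := socle r⁻¹ n hn z₂ hz₂
      set σ : JQuot r n × JQuot r⁻¹ n :=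
        (0, Ideal.Quotient.mk _ ((X - C r⁻¹) ^ (n - 1))) with hσ_def
      have hσ₁ : σ ∈ W₁ := by
        have h5 := aeval_mem r n W₁ ha₁ f₁ hm₁
        rwa [aeval_apply, mul_zero, hf₁] at h5
      have hσ₂ : σ ∈ W₂ := by
        have h5 := aeval_mem r n W₂ ha₂ f₂ hm₂
        rwa [aeval_apply, mul_zero, hf₂] at h5
      have h6 : σ ∈ W₁ ⊓ W₂ := ⟨hσ₁, hσ₂⟩
      rw [hinf, Submodule.mem_bot] at h6
      exact mk_pow_ne_zero r⁻¹ n hn (congrArg Prod.snd h6)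
    · exact hWcase W₂ hW₂ ha₂ hbW₂ h₂
  · exact hWcase W₁ hW₁ ha₁ hbW₁ h₁
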